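/- Scalar moment comparison: let w_1,…,w_k ∈ ℝ and x_1,…,x_k ∈ ℝ with |x_i| ≤ 1, and set M_t = Σ_{i=1}^k w_i x_i^t. Then for every t ≥ k, |M_t| ≤ binom(t, k−1)·(2k)^k · max_{0 ≤ s < k} |M_s|. -/

import Mathlib

/-- Complete homogeneous sum of degree `m` in the variables of the list `l`. -/
noncomputable def hc : ℕ → List ℝ → ℝ
  | 0, _ => 1
  | _ + 1, [] => 0
  | m + 1, x :: l => hc (m + 1) l + x * hc m (x :: l)
  termination_by m l => (m, l.length)

@[simp] theorem hc_zero (l : List ℝ) : hc 0 l = 1 := by rw [hc]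

@[simp] theorem hc_nil (m : ℕ) : hc (m + 1) [] = 0 := by rw [hc]

theorem hc_cons (m : ℕ) (x : ℝ) (l : List ℝ) :
    hc (m + 1) (x :: l) = hc (m + 1) l + x * hc m (x :: l) := by rw [hc]

@[simp] theorem hc_singleton (m : ℕ) (y : ℝ) : hc m [y] = y ^ m := by
  induction m with
  | zero => simp
  | succ n ih => rw [hc_cons, ih, hc_nil, pow_succ]; ring

theorem hc_abs_le : ∀ (m : ℕ) (l : List ℝ), (∀ x ∈ l, |x| ≤ 1) →
    |hc m l| ≤ ((m + l.length - 1).choose m : ℝ)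
  | 0, l, _ => by simp
  | m + 1, [], _ => by simp
  | m + 1, x :: l, h => by
    have h1 := hc_abs_le (m + 1) l (fun a ha => h a (List.mem_cons_of_mem _ ha))
    have h2 := hc_abs_le m (x :: l) h
    have hx : |x| ≤ 1 := h x List.mem_cons_self
    have key : ((m + 1 + l.length - 1).choose (m + 1) : ℝ) + ((m + (x :: l).length - 1).choose m : ℝ)
        ≤ ((m + 1 + (x :: l).length - 1).choose (m + 1) : ℝ) := by
      rw [← Nat.cast_add, Nat.cast_le]
      have e1 : m + 1 + l.length - 1 = m + l.length := by omega
      have e2 : m + (x :: l).length - 1 = m + l.length := by simp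
      have e3 : m + 1 + (x :: l).length - 1 = m + l.length + 1 := by simp; omega
      rw [e1, e2, e3, Nat.choose_succ_succ' (m + l.length) m]; omega
    refine le_trans ?_ key
    rw [hc_cons]
    refine (abs_add_le _ _).trans (add_le_add h1 ?_)
    rw [abs_mul]
    calc |x| * |hc m (x :: l)| ≤ 1 * ((m + (x :: l).length - 1).choose m : ℝ) := by
          apply mul_le_mul hx h2 (abs_nonneg _) zero_le_one
      _ = _ := one_mul _
  termination_by m l => (m, l.length)

theorem hc_sub (m : ℕ) (y z : ℝ) (v : List ℝ) :
    hc (m + 1) (y :: v) - hc (m + 1) (z :: v) = (y - z) * hc m (y :: z :: v) := by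
  induction m with
  | zero => rw [hc_cons, hc_cons]; simp
  | succ n ih =>
    rw [hc_cons (n+1) y v, hc_cons (n+1) z v, hc_cons n y (z :: v)]
    linear_combination y * ih

theorem hc_expand : ∀ (zs v : List ℝ) (m : ℕ) (y : ℝ), zs.length ≤ m →
    hc m (y :: v) = (∑ s ∈ Finset.range zs.length,
        hc (m - s) ((zs.take (s+1)).reverse ++ v) * ((zs.take s).map (fun a => y - a)).prod)
      + ((zs.map (fun a => y - a)).prod) * hc (m - zs.length) (y :: (zs.reverse ++ v)) := by
  intro zs
  induction zs with
  | nil => intro v m y _; simp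
  | cons z rest ih =>
    intro v m y hm
    obtain ⟨m', rfl⟩ : ∃ m', m = m' + 1 := ⟨m - 1, by simp at hm; omega⟩
    have hrest : rest.length ≤ m' := by simp at hm; omega
    have step : hc (m' + 1) (y :: v)
        = hc (m' + 1) (z :: v) + (y - z) * hc m' (y :: z :: v) := by
      linear_combination hc_sub m' y z v
    rw [step, ih (z :: v) m' y hrest]
    simp only [List.length_cons]
    rw [Finset.sum_range_succ']
    simp only [ List.take_succ_cons, List.take_zero, List.reverse_cons,
      List.map_cons, List.prod_cons, List.map_nil, List.prod_nil, List.reverse_nil,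
      List.append_assoc, List.singleton_append, List.cons_append, List.nil_append,
      Nat.succ_sub_succ, mul_one, one_mul, Nat.sub_zero, mul_add, Finset.mul_sum]
    rw [show (∑ i ∈ Finset.range rest.length, (y - z) *
        (hc (m' - i) ((List.take (i + 1) rest).reverse ++ z :: v) *
          (List.map (fun a => y - a) (List.take i rest)).prod))
      = ∑ i ∈ Finset.range rest.length,
          hc (m' - i) ((List.take (i + 1) rest).reverse ++ z :: v) *
            ((y - z) * (List.map (fun a => y - a) (List.take i rest)).prod) from
      Finset.sum_congr rfl fun i _ => by ring]
    ring

theorem pow_eq_sum_at_root (xs : List ℝ) (t : ℕ) (ht : xs.length ≤ t) (r : ℝ) (hr : r ∈ xs) :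
    r ^ t = ∑ s ∈ Finset.range xs.length,
      hc (t - s) ((xs.take (s+1)).reverse) * ((xs.take s).map (fun a => r - a)).prod := by
  have h := hc_expand xs [] t r ht
  have hz : ((xs.map (fun a => r - a)).prod) = 0 :=
    List.prod_eq_zero (List.mem_map.mpr ⟨r, hr, sub_self r⟩)
  simp only [List.append_nil, hz, zero_mul, add_zero, hc_singleton] at h
  exact h

theorem nat_sum_bound (k t : ℕ) (hk : 0 < k) (ht : k ≤ t) :
    ∑ s ∈ Finset.range k, t.choose s * 2 ^ s ≤ t.choose (k - 1) * (2 * k) ^ k := by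
  have h1 : ∀ s ∈ Finset.range k, t.choose s * 2 ^ s ≤ t.choose (k - 1) * ((k-1).choose s * 2 ^ s) := by
    intro s hs
    rw [Finset.mem_range] at hs
    have hsk : s ≤ k - 1 := by omega
    have hkt : k - 1 ≤ t := by omega
    have := Nat.choose_mul (n := t) hsk
    have hpos : 0 < (t - s).choose (k - 1 - s) := Nat.choose_pos (by omega)
    have h2 : t.choose s ≤ t.choose (k - 1) * (k - 1).choose s := by
      calc t.choose s ≤ t.choose s * (t - s).choose (k - 1 - s) := Nat.le_mul_of_pos_right _ hpos
        _ = t.choose (k - 1) * (k - 1).choose s := this.symm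
    calc t.choose s * 2 ^ s ≤ (t.choose (k - 1) * (k - 1).choose s) * 2 ^ s :=
          Nat.mul_le_mul_right _ h2
      _ = t.choose (k - 1) * ((k-1).choose s * 2 ^ s) := by ring
  calc ∑ s ∈ Finset.range k, t.choose s * 2 ^ s
      ≤ ∑ s ∈ Finset.range k, t.choose (k - 1) * ((k-1).choose s * 2 ^ s) :=
        Finset.sum_le_sum h1
    _ = t.choose (k - 1) * ∑ s ∈ Finset.range k, (k-1).choose s * 2 ^ s := by
        rw [Finset.mul_sum]
    _ ≤ t.choose (k - 1) * (2 * k) ^ k := by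
        apply Nat.mul_le_mul_left
        have e : ∑ s ∈ Finset.range k, (k-1).choose s * 2 ^ s = 3 ^ (k - 1) := by
          have h3 : (3 : ℕ) = 2 + 1 := rfl
          rw [h3, add_pow]
          have hk1 : k - 1 + 1 = k := by omega
          rw [hk1]
          apply Finset.sum_congr rfl
          intro s hs
          simp [mul_comm]
        rw [e]
        rcases Nat.eq_or_lt_of_le hk with h | h
        · simp [← h]
        · have h2 : 2 ≤ k := by omega
          calc 3 ^ (k - 1) ≤ (2 * k) ^ (k - 1) :=
                Nat.pow_le_pow_left (by omega) _
            _ ≤ (2 * k) ^ k := Nat.pow_le_pow_right (by omega) (by omega)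


/-- Scalar moment comparison: if `M_t = Σ_{i=1}^k w_i x_i^t` with `|x_i| ≤ 1`, then for
`t ≥ k`, `|M_t| ≤ binom(t, k−1)·(2k)^k · max_{0 ≤ s < k} |M_s|`. -/
theorem scalar_moment_comparison (k : ℕ) (hk : 0 < k) (w x : Fin k → ℝ)
    (hx : ∀ i, |x i| ≤ 1) (t : ℕ) (ht : k ≤ t) :
    |∑ i, w i * x i ^ t| ≤
      (Nat.choose t (k - 1) : ℝ) * (2 * k : ℝ) ^ k *
        (Finset.range k).sup' (Finset.nonempty_range_iff.mpr hk.ne')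
          (fun s => |∑ i, w i * x i ^ s|) := by
  set C := (Finset.range k).sup' (Finset.nonempty_range_iff.mpr hk.ne')
      (fun s => |∑ i, w i * x i ^ s|) with hCdef
  have hCle : ∀ j < k, |∑ i, w i * x i ^ j| ≤ C := fun j hj =>
    Finset.le_sup' (fun s => |∑ i, w i * x i ^ s|) (Finset.mem_range.mpr hj)
  have hC0 : 0 ≤ C := le_trans (abs_nonneg _) (hCle 0 hk)
  -- weighted products bound
  have key : ∀ (l : List ℝ), (∀ a ∈ l, |a| ≤ 1) → ∀ j, j + l.length + 1 ≤ k →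
      |∑ i, w i * x i ^ j * ((l.map (fun a => x i - a)).prod)| ≤ 2 ^ l.length * C := by
    intro l
    induction l with
    | nil =>
      intro _ j hj
      simp only [List.map_nil, List.prod_nil, mul_one, List.length_nil, pow_zero, one_mul]
      exact hCle j (by omega)
    | cons a l ih =>
      intro hmem j hj
      have ha : |a| ≤ 1 := hmem a List.mem_cons_self
      have hmem' : ∀ b ∈ l, |b| ≤ 1 := fun b hb => hmem b (List.mem_cons_of_mem _ hb)
      have hlen : (a :: l).length = l.length + 1 := rfl
      have e : ∑ i, w i * x i ^ j * (((a :: l).map (fun b => x i - b)).prod)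
          = (∑ i, w i * x i ^ (j+1) * ((l.map (fun b => x i - b)).prod))
            - a * ∑ i, w i * x i ^ j * ((l.map (fun b => x i - b)).prod) := by
        rw [Finset.mul_sum, ← Finset.sum_sub_distrib]
        refine Finset.sum_congr rfl fun i _ => ?_
        simp only [List.map_cons, List.prod_cons]
        ring
      rw [e, hlen]
      have h1 := ih hmem' (j+1) (by rw [hlen] at hj; omega)
      have h2 := ih hmem' j (by rw [hlen] at hj; omega)
      calc |(∑ i, w i * x i ^ (j+1) * ((l.map (fun b => x i - b)).prod))
            - a * ∑ i, w i * x i ^ j * ((l.map (fun b => x i - b)).prod)|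
          ≤ |∑ i, w i * x i ^ (j+1) * ((l.map (fun b => x i - b)).prod)|
            + |a| * |∑ i, w i * x i ^ j * ((l.map (fun b => x i - b)).prod)| := by
            refine (abs_sub _ _).trans ?_
            rw [abs_mul]
        _ ≤ 2 ^ l.length * C + 1 * (2 ^ l.length * C) := by
            refine add_le_add h1 ?_
            exact mul_le_mul ha h2 (abs_nonneg _) zero_le_one
        _ = 2 ^ (l.length + 1) * C := by ring
  -- the node list
  set xs := List.ofFn x with hxs
  have hlen : xs.length = k := by simp [hxs]
  have hmemxs : ∀ a ∈ xs, |a| ≤ 1 := by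
    intro a ha
    rw [hxs, List.mem_ofFn] at ha
    obtain ⟨i, rfl⟩ := ha
    exact hx i
  have hroot : ∀ i : Fin k, x i ^ t = ∑ s ∈ Finset.range k,
      hc (t - s) ((xs.take (s+1)).reverse) * ((xs.take s).map (fun a => x i - a)).prod := by
    intro i
    have hm : x i ∈ xs := by rw [hxs, List.mem_ofFn]; exact ⟨i, rfl⟩
    have := pow_eq_sum_at_root xs t (by rw [hlen]; exact ht) (x i) hm
    rwa [hlen] at this
  have main_eq : ∑ i, w i * x i ^ t = ∑ s ∈ Finset.range k,
      hc (t - s) ((xs.take (s+1)).reverse) *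
        (∑ i, w i * ((xs.take s).map (fun a => x i - a)).prod) := by
    calc ∑ i, w i * x i ^ t
        = ∑ i, ∑ s ∈ Finset.range k, w i * (hc (t - s) ((xs.take (s+1)).reverse) *
            ((xs.take s).map (fun a => x i - a)).prod) := by
          refine Finset.sum_congr rfl fun i _ => ?_
          rw [hroot i, Finset.mul_sum]
      _ = ∑ s ∈ Finset.range k, ∑ i, w i * (hc (t - s) ((xs.take (s+1)).reverse) *
            ((xs.take s).map (fun a => x i - a)).prod) := Finset.sum_comm
      _ = _ := by
          refine Finset.sum_congr rfl fun s _ => ?_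
          rw [Finset.mul_sum]
          refine Finset.sum_congr rfl fun i _ => ?_
          ring
  rw [main_eq]
  have hterm : ∀ s ∈ Finset.range k,
      |hc (t - s) ((xs.take (s+1)).reverse) *
        (∑ i, w i * ((xs.take s).map (fun a => x i - a)).prod)|
      ≤ (t.choose s : ℝ) * (2 ^ s * C) := by
    intro s hs
    rw [Finset.mem_range] at hs
    have hsk : s + 1 ≤ k := hs
    have hlen1 : ((xs.take (s+1)).reverse).length = s + 1 := by
      rw [List.length_reverse, List.length_take, hlen]; omega
    have hlen2 : (xs.take s).length = s := by
      rw [List.length_take, hlen]; omega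
    rw [abs_mul]
    have hb1 : |hc (t - s) ((xs.take (s+1)).reverse)| ≤ (t.choose s : ℝ) := by
      have := hc_abs_le (t - s) ((xs.take (s+1)).reverse)
        (fun a ha => hmemxs a (List.mem_of_mem_take (List.mem_reverse.mp ha)))
      rw [hlen1] at this
      have e : t - s + (s + 1) - 1 = t := by omega
      rw [e] at this
      rwa [show t.choose (t - s) = t.choose s from by
        rw [← Nat.choose_symm (by omega : s ≤ t)]] at this
    have hb2 : |∑ i, w i * ((xs.take s).map (fun a => x i - a)).prod| ≤ 2 ^ s * C := by
      have := key (xs.take s) (fun a ha => hmemxs a (List.mem_of_mem_take ha)) 0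
        (by rw [hlen2]; omega)
      rw [hlen2] at this
      simpa using this
    exact mul_le_mul hb1 hb2 (abs_nonneg _) (le_trans (abs_nonneg _) hb1)
  calc |∑ s ∈ Finset.range k, hc (t - s) ((xs.take (s+1)).reverse) *
        (∑ i, w i * ((xs.take s).map (fun a => x i - a)).prod)|
      ≤ ∑ s ∈ Finset.range k, |hc (t - s) ((xs.take (s+1)).reverse) *
        (∑ i, w i * ((xs.take s).map (fun a => x i - a)).prod)| :=
        Finset.abs_sum_le_sum_abs _ _
    _ ≤ ∑ s ∈ Finset.range k, (t.choose s : ℝ) * (2 ^ s * C) := Finset.sum_le_sum hterm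
    _ = ((∑ s ∈ Finset.range k, t.choose s * 2 ^ s : ℕ) : ℝ) * C := by
        push_cast
        rw [Finset.sum_mul]
        exact Finset.sum_congr rfl fun s _ => by ring
    _ ≤ ((t.choose (k - 1) * (2 * k) ^ k : ℕ) : ℝ) * C := by
        refine mul_le_mul_of_nonneg_right ?_ hC0
        exact_mod_cast nat_sum_bound k t hk ht
    _ = (t.choose (k - 1) : ℝ) * (2 * k : ℝ) ^ k * C := by push_cast; ring
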